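/- Let f : (−1, 1) → ℝ be continuous and nondecreasing with f(r) → +∞ as r → 1⁻. Let κ ∈ (0, 1], M ≥ 0 and τ > 0. Then there exists ω ∈ (0, 1), depending only on f, κ, M and τ (but not on T), such that for every T > 2τ and every differentiable function y : [τ, T] → ℝ satisfying y(t) ∈ (−1, 1) for all t ∈ [τ, T] and y′(t) + κ·f(y(t)) ≤ M for all t ∈ [τ, T], one has y(t) ≤ 1 − ω for all t ∈ [2τ, T]. -/

import Mathlib

open Set Filter

/-- ODE comparison fact behind Corollary 3.2 of the paper: if `f : (-1,1) → ℝ` is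
continuous, nondecreasing and blows up to `+∞` at `1⁻`, `κ ∈ (0,1]`, `M ≥ 0`, `τ > 0`,
then there is `ω ∈ (0,1)`, independent of `T`, such that any differentiable
`y : [τ,T] → (-1,1)` with `y' + κ f(y) ≤ M` on `[τ,T]` satisfies `y ≤ 1 - ω`
on `[2τ,T]`. -/
theorem stmt1 (f : ℝ → ℝ)
    (hfc : ContinuousOn f (Ioo (-1 : ℝ) 1))
    (hfm : MonotoneOn f (Ioo (-1 : ℝ) 1))
    (hftop : Tendsto f (nhdsWithin 1 (Ioo (-1 : ℝ) 1)) atTop)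
    (κ M τ : ℝ) (hκ : κ ∈ Ioc (0 : ℝ) 1) (hM : 0 ≤ M) (hτ : 0 < τ) :
    ∃ ω ∈ Ioo (0 : ℝ) 1, ∀ T : ℝ, 2 * τ < T → ∀ y : ℝ → ℝ,
      (∀ t ∈ Icc τ T, DifferentiableAt ℝ y t) →
      (∀ t ∈ Icc τ T, y t ∈ Ioo (-1 : ℝ) 1) →
      (∀ t ∈ Icc τ T, deriv y t + κ * f (y t) ≤ M) →
      ∀ t ∈ Icc (2 * τ) T, y t ≤ 1 - ω := by
  obtain ⟨hκ0, hκ1⟩ := hκ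
  have hEv : ∀ᶠ x in nhdsWithin 1 (Ioo (-1 : ℝ) 1), (M + 1) / κ ≤ f x :=
    hftop.eventually (eventually_ge_atTop _)
  rw [eventually_nhdsWithin_iff, Metric.eventually_nhds_iff] at hEv
  obtain ⟨ε, hε, hball⟩ := hEv
  set δ : ℝ := min (min ε τ) 1 / 2 with hδdef
  have hδ0 : 0 < δ := by
    have : 0 < min (min ε τ) 1 := lt_min (lt_min hε hτ) one_pos
    positivity
  have hδε : δ < ε := by
    have h1 : min (min ε τ) 1 ≤ ε := le_trans (min_le_left _ _) (min_le_left _ _)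
    have := hε; simp only [hδdef]; linarith
  have hδτ : δ ≤ τ := by
    have h1 : min (min ε τ) 1 ≤ τ := le_trans (min_le_left _ _) (min_le_right _ _)
    simp only [hδdef]; linarith
  have hδhalf : δ ≤ 1 / 2 := by
    have h1 : min (min ε τ) 1 ≤ 1 := min_le_right _ _
    simp only [hδdef]; linarith
  set a : ℝ := 1 - δ with hadef
  have haIoo : a ∈ Ioo (-1 : ℝ) 1 := ⟨by simp only [hadef]; linarith, by simp only [hadef]; linarith⟩
  have hfa : (M + 1) / κ ≤ f a := by
    have hdist : dist a 1 < ε := by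
      rw [Real.dist_eq]
      have : |a - 1| = δ := by rw [hadef]; rw [abs_of_nonpos (by linarith)]; ring
      rw [this]; exact hδε
    exact hball hdist haIoo
  have hκfa : M + 1 ≤ κ * f a := by
    have := (div_le_iff₀ hκ0).mp hfa
    linarith [this]
  refine ⟨δ, ⟨hδ0, by linarith⟩, ?_⟩
  intro T hT y hdiff hmem hode t ht
  have hτt : τ < t := lt_of_lt_of_le (by linarith) ht.1
  have htT : t ≤ T := ht.2
  by_contra hcon
  push_neg at hcon
  have hat : a < y t := by simp only [hadef]; linarith
  have hyc : ContinuousOn y (Icc τ T) := fun s hs =>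
    (hdiff s hs).continuousAt.continuousWithinAt
  -- the set of times in [τ,t] where y ≤ a, plus τ
  set S : Set ℝ := Icc τ t ∩ y ⁻¹' Iic a with hSdef
  have hScl : IsClosed S :=
    (hyc.mono (Icc_subset_Icc le_rfl htT)).preimage_isClosed_of_isClosed
      isClosed_Icc isClosed_Iic
  have hScomp : IsCompact S :=
    isCompact_Icc.of_isClosed_subset hScl (inter_subset_left)
  have hKcomp : IsCompact (insert τ S) := hScomp.insert τ
  set c : ℝ := sSup (insert τ S) with hcdef
  have hKne : (insert τ S).Nonempty := ⟨τ, mem_insert _ _⟩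
  have hcK : c ∈ insert τ S := hKcomp.sSup_mem hKne
  have hτc : τ ≤ c := le_csSup hKcomp.bddAbove (mem_insert _ _)
  have hct : c ≤ t := by
    apply csSup_le hKne
    rintro x (rfl | hx)
    · exact hτt.le
    · exact hx.1.2
  have hclt : c < t := by
    rcases lt_or_eq_of_le hct with h | h
    · exact h
    · exfalso
      rw [h] at hcK
      rcases hcK with h' | h'
      · exact absurd h'.symm (ne_of_lt hτt)
      · exact absurd h'.2 (not_le.mpr hat)
  have h_above : ∀ s ∈ Ioc c t, a < y s := by
    intro s hs
    by_contra hsa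
    push_neg at hsa
    have hsS : s ∈ S := ⟨⟨le_trans hτc hs.1.le, hs.2⟩, hsa⟩
    have : s ≤ c := le_csSup hKcomp.bddAbove (mem_insert_of_mem _ hsS)
    exact absurd hs.1 (not_lt.mpr this)
  have hsub : Icc c t ⊆ Icc τ T := Icc_subset_Icc hτc htT
  -- g s = y s + s is antitone on [c,t]
  set g : ℝ → ℝ := fun s => y s + s with hgdef
  have hganti : AntitoneOn g (Icc c t) := by
    apply antitoneOn_of_deriv_nonpos (convex_Icc c t)
    · exact (hyc.mono hsub).add continuousOn_id
    · intro s hs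
      rw [interior_Icc] at hs
      exact ((hdiff s (hsub ⟨hs.1.le, hs.2.le⟩)).add differentiableAt_fun_id).differentiableWithinAt
    · intro s hs
      rw [interior_Icc] at hs
      have hsIcc : s ∈ Icc τ T := hsub ⟨hs.1.le, hs.2.le⟩
      have hderiv : deriv g s = deriv y s + 1 := by
        have h1 : HasDerivAt g (deriv y s + 1) s :=
          (hdiff s hsIcc).hasDerivAt.add (hasDerivAt_id s)
        exact h1.deriv
      rw [hderiv]
      have hays : a < y s := h_above s ⟨hs.1, hs.2.le⟩
      have hfs : f a ≤ f (y s) := hfm haIoo (hmem s hsIcc) hays.le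
      have h2 : κ * f a ≤ κ * f (y s) := mul_le_mul_of_nonneg_left hfs hκ0.le
      have h3 := hode s hsIcc
      linarith
  have hgc : g t ≤ g c := hganti ⟨le_rfl, hclt.le⟩ ⟨hclt.le, le_rfl⟩ hclt.le
  have hyc' : y t + (t - c) ≤ y c := by simp only [hgdef] at hgc; linarith
  rcases hcK with hcτ | hcS
  · -- c = τ : then y τ > a + τ ≥ 1, contradiction
    have hyτ : y τ < 1 := (hmem τ ⟨le_rfl, by linarith⟩).2
    have htc : τ ≤ t - c := by rw [hcτ]; linarith [ht.1]
    have : (1 : ℝ) < y c := by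
      have : a + δ ≤ a + (t - c) := by linarith
      simp only [hadef] at this ⊢
      linarith
    rw [hcτ] at this
    linarith
  · -- c ∈ S : y c ≤ a but y c > a
    have h1 : y c ≤ a := hcS.2
    have h2 : a < y c := by linarith
    linarith
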